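/- Let g : ℝ² → ℝ² be the shear map g(θ, r) = (θ + b·r, r) for an integer b with |b| ≥ 2. Let K = [k₁, k₂] be an interval on the r-axis with λ(K) ≤ 1, let K_{c,γ} = [c, c+γ] × K be a vertical strip, and let L = [l₁, l₂] ⊆ [0,1] be an interval on the θ-axis, where the first coordinate is taken modulo 1. If b·λ(K) > 2, then the set Q = π_r(K_{c,γ} ∩ g⁻¹(L × K)) (projection onto the r-coordinate of the part of the strip mapped by g into L × K, with first coordinate mod 1) satisfies |λ(Q) − λ(K)·λ(L)| ≤ γ·λ(K) + 2·λ(L)/b + 2γ/b. -/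

import Mathlib

open MeasureTheory Set

/-- Shear distribution estimate (Lemma "prelim1" of Fayad–Saprykina):
for the shear `g(θ,r) = (θ + b·r, r)` on the annulus (first coordinate mod 1),
the projection `Q` to the `r`-axis of the part of the vertical strip
`[c,c+γ] × K` mapped by `g` into `L × K` has measure close to `λ(K)·λ(L)`. -/
theorem shear_strip_distribution
    (b : ℤ) (hb : 2 ≤ |b|)
    (k₁ k₂ c γ l₁ l₂ : ℝ)
    (hK : k₁ ≤ k₂) (hKlen : k₂ - k₁ ≤ 1)
    (hγ : 0 ≤ γ)
    (hL₁ : 0 ≤ l₁) (hL : l₁ ≤ l₂) (hL₂ : l₂ ≤ 1)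
    (hbK : 2 < (b : ℝ) * (k₂ - k₁))
    (Q : Set ℝ)
    (hQ : Q = {r ∈ Icc k₁ k₂ |
      ∃ θ ∈ Icc c (c + γ), ∃ p : ℤ, θ + (b : ℝ) * r + (p : ℝ) ∈ Icc l₁ l₂}) :
    |(volume Q).toReal - (k₂ - k₁) * (l₂ - l₁)| ≤
      γ * (k₂ - k₁) + 2 * (l₂ - l₁) / (b : ℝ) + 2 * γ / (b : ℝ) := by
  have hΔ0 : (0:ℝ) ≤ k₂ - k₁ := by linarith
  set B : ℝ := (b : ℝ) with hBdef
  have hB0 : (0:ℝ) < B := by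
    by_contra h
    push_neg at h
    nlinarith [mul_nonneg (neg_nonneg.mpr h) hΔ0]
  have hB2 : (2:ℝ) < B := by nlinarith [mul_le_mul_of_nonneg_left hKlen hB0.le]
  set A : ℝ := l₁ - c - γ with hA
  set C : ℝ := l₂ - c with hC
  set s : ℝ := l₂ - l₁ + γ with hs
  have hCA : C - A = s := by rw [hA, hC, hs]; ring
  have hs0 : 0 ≤ s := by rw [hs]; linarith
  -- Step 1: rewrite Q
  have hQ' : Q = {r | r ∈ Icc k₁ k₂ ∧ ∃ m : ℤ, A + (m:ℝ) ≤ B * r ∧ B * r ≤ C + (m:ℝ)} := by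
    rw [hQ]
    ext r
    simp only [mem_sep_iff, mem_setOf_eq, mem_Icc]
    constructor
    · rintro ⟨hr, θ, ⟨hθ1, hθ2⟩, p, hp1, hp2⟩
      refine ⟨hr, -p, ?_, ?_⟩
      · push_cast
        rw [hA]; linarith
      · push_cast
        rw [hC]; linarith
    · rintro ⟨hr, m, h1, h2⟩
      refine ⟨hr, max c (l₁ - (B * r - (m:ℝ))), ⟨le_max_left _ _, ?_⟩, -m, ?_, ?_⟩
      · apply max_le (by linarith)
        rw [hA] at h1; linarith
      · push_cast
        have := le_max_right c (l₁ - (B * r - (m:ℝ)))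
        linarith
      · push_cast
        have hmax : max c (l₁ - (B * r - (m:ℝ))) ≤ l₂ - B * r + m := by
          apply max_le
          · rw [hC] at h2; linarith
          · linarith
        linarith
  rcases le_or_gt 1 s with hs1 | hs1
  · -- dense case: Q is the whole interval
    have hQ2 : Q = Icc k₁ k₂ := by
      rw [hQ']
      ext r
      simp only [mem_setOf_eq]
      constructor
      · exact fun h => h.1
      · intro h
        refine ⟨h, ⌈B * r - C⌉, ?_, ?_⟩
        · have h1 := Int.ceil_lt_add_one (B * r - C)
          linarith [hCA, hs1]
        · have h2 := Int.le_ceil (B * r - C)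
          linarith
    rw [hQ2, Real.volume_Icc, ENNReal.toReal_ofReal hΔ0]
    have h1 : 0 ≤ 2 * (l₂ - l₁) / B := div_nonneg (by linarith) hB0.le
    have h2 : 0 ≤ 2 * γ / B := div_nonneg (by linarith) hB0.le
    have h3 : 0 ≤ (k₂ - k₁) - (k₂ - k₁) * (l₂ - l₁) := by nlinarith
    rw [abs_of_nonneg h3]
    nlinarith [mul_nonneg hΔ0 (by linarith : (0:ℝ) ≤ l₂ - l₁ + γ - 1)]
  · -- sparse case
    set m₀ : ℤ := ⌈B * k₁ - C⌉ with hm₀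
    set m₁ : ℤ := ⌊B * k₂ - A⌋ with hm₁
    set I : ℤ → Set ℝ := fun m => Icc (max k₁ ((A + m) / B)) (min k₂ ((C + m) / B)) with hI
    have hdiv1 : ∀ (x r : ℝ), x / B ≤ r ↔ x ≤ B * r := by
      intro x r; rw [div_le_iff₀ hB0, mul_comm]
    have hdiv2 : ∀ (r x : ℝ), r ≤ x / B ↔ B * r ≤ x := by
      intro r x; rw [le_div_iff₀ hB0, mul_comm]
    have hQ3 : Q = ⋃ m ∈ Finset.Icc m₀ m₁, I m := by
      rw [hQ']
      ext r
      simp only [mem_setOf_eq, mem_iUnion, Finset.mem_Icc, exists_prop, hI, mem_Icc, mem_Icc]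
      constructor
      · rintro ⟨⟨hr1, hr2⟩, m, h1, h2⟩
        have hbr1 : B * k₁ ≤ B * r := mul_le_mul_of_nonneg_left hr1 hB0.le
        have hbr2 : B * r ≤ B * k₂ := mul_le_mul_of_nonneg_left hr2 hB0.le
        refine ⟨m, ⟨Int.ceil_le.mpr (by linarith), Int.le_floor.mpr (by linarith)⟩,
          max_le hr1 ((hdiv1 _ _).mpr h1), le_min hr2 ((hdiv2 _ _).mpr h2)⟩
      · rintro ⟨m, _, hx1, hx2⟩
        refine ⟨⟨le_trans (le_max_left _ _) hx1, le_trans hx2 (min_le_left _ _)⟩,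
          m, (hdiv1 _ _).mp (le_trans (le_max_right _ _) hx1),
          (hdiv2 _ _).mp (le_trans hx2 (min_le_right _ _))⟩
    have hIdisj : ∀ m n : ℤ, m < n → Disjoint (I m) (I n) := by
      intro m n hmn
      apply Set.disjoint_left.mpr
      intro x hx1 hx2
      simp only [hI, mem_Icc] at hx1 hx2
      have h1 : x ≤ (C + (m:ℝ)) / B := le_trans hx1.2 (min_le_right _ _)
      have h2 : (A + (n:ℝ)) / B ≤ x := le_trans (le_max_right _ _) hx2.1
      have hmn' : (m:ℝ) + 1 ≤ n := by exact_mod_cast hmn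
      have hlt : (C + (m:ℝ)) / B < (A + (n:ℝ)) / B := by
        apply (div_lt_div_iff₀ hB0 hB0).mpr
        nlinarith
      linarith
    have hvol : volume Q = ∑ m ∈ Finset.Icc m₀ m₁, volume (I m) := by
      rw [hQ3]
      apply measure_biUnion_finset
      · intro m _ n _ hmn
        rcases lt_or_gt_of_ne hmn with h | h
        · exact hIdisj m n h
        · exact (hIdisj n m h).symm
      · exact fun m _ => measurableSet_Icc
    set t : ℤ → ℝ := fun m => max (min k₂ ((C + m) / B) - max k₁ ((A + m) / B)) 0 with ht
    have hV : (volume Q).toReal = ∑ m ∈ Finset.Icc m₀ m₁, t m := by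
      rw [hvol, ENNReal.toReal_sum (fun m _ => by
        simp only [hI, Real.volume_Icc]; exact ENNReal.ofReal_ne_top)]
      apply Finset.sum_congr rfl
      intro m _
      simp only [hI, Real.volume_Icc, ENNReal.toReal_ofReal', ht]
    have ht_nonneg : ∀ m : ℤ, 0 ≤ t m := fun m => le_max_right _ _
    have ht_le : ∀ m ∈ Finset.Icc m₀ m₁, t m ≤ s / B := by
      intro m _
      apply max_le _ (div_nonneg hs0 hB0.le)
      have h1 : min k₂ ((C + (m:ℝ)) / B) - max k₁ ((A + (m:ℝ)) / B)
          ≤ (C + (m:ℝ)) / B - (A + (m:ℝ)) / B :=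
        sub_le_sub (min_le_right _ _) (le_max_right _ _)
      have h2 : (C + (m:ℝ)) / B - (A + (m:ℝ)) / B = s / B := by
        rw [div_sub_div_same]
        congr 1
        linarith [hCA]
      linarith
    -- upper bound for the sum
    have hm1r : (m₁:ℝ) ≤ B * k₂ - A := Int.floor_le _
    have hm0r : B * k₁ - C ≤ (m₀:ℝ) := Int.le_ceil _
    have hcard1 : ((Finset.Icc m₀ m₁).card : ℝ) ≤ B * (k₂ - k₁) + s + 1 := by
      by_cases h : m₀ ≤ m₁
      · have hc : ((Finset.Icc m₀ m₁).card : ℤ) = m₁ + 1 - m₀ := by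
          rw [Int.card_Icc, Int.toNat_of_nonneg (by omega)]
        have hc' : ((Finset.Icc m₀ m₁).card : ℝ) = (m₁:ℝ) + 1 - m₀ := by
          exact_mod_cast congrArg (Int.cast : ℤ → ℝ) hc
        rw [hc']
        linarith [hCA]
      · rw [Finset.Icc_eq_empty h]
        simp only [Finset.card_empty, Nat.cast_zero]
        linarith
    have hVle : (volume Q).toReal ≤ s * (k₂ - k₁) + s * (s + 1) / B := by
      rw [hV]
      have h1 := Finset.sum_le_card_nsmul (Finset.Icc m₀ m₁) t (s / B) ht_le
      rw [nsmul_eq_mul] at h1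
      have h2 : ((Finset.Icc m₀ m₁).card : ℝ) * (s / B)
          ≤ (B * (k₂ - k₁) + s + 1) * (s / B) :=
        mul_le_mul_of_nonneg_right hcard1 (div_nonneg hs0 hB0.le)
      have h3 : (B * (k₂ - k₁) + s + 1) * (s / B) = s * (k₂ - k₁) + s * (s + 1) / B := by
        field_simp
        ring
      linarith
    -- lower bound for the sum
    set n₀ : ℤ := ⌈B * k₁ - A⌉ with hn₀
    set n₁ : ℤ := ⌊B * k₂ - C⌋ with hn₁
    have hsub : Finset.Icc n₀ n₁ ⊆ Finset.Icc m₀ m₁ :=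
      Finset.Icc_subset_Icc (Int.ceil_le_ceil (by linarith [hCA]))
        (Int.floor_le_floor (by linarith [hCA]))
    have ht_eq : ∀ m ∈ Finset.Icc n₀ n₁, t m = s / B := by
      intro m hm
      rw [Finset.mem_Icc] at hm
      have h1 : k₁ ≤ (A + (m:ℝ)) / B := by
        rw [hdiv2]
        have := Int.ceil_le.mp hm.1
        linarith
      have h2 : (C + (m:ℝ)) / B ≤ k₂ := by
        rw [hdiv1]
        have := Int.le_floor.mp hm.2
        linarith
      simp only [ht]
      rw [max_eq_right h1, min_eq_right h2, div_sub_div_same]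
      have : C + (m:ℝ) - (A + (m:ℝ)) = s := by linarith [hCA]
      rw [this]
      exact max_eq_left (div_nonneg hs0 hB0.le)
    have hn1r : B * k₂ - C - 1 < (n₁:ℝ) := Int.sub_one_lt_floor _
    have hn0r : (n₀:ℝ) < B * k₁ - A + 1 := Int.ceil_lt_add_one _
    have hn01 : n₀ ≤ n₁ := by
      have h : (n₀:ℝ) < (n₁:ℝ) + 1 := by linarith [hCA]
      have h' : n₀ < n₁ + 1 := by exact_mod_cast h
      omega
    have hcard2 : B * (k₂ - k₁) - s - 1 ≤ ((Finset.Icc n₀ n₁).card : ℝ) := by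
      have hc : ((Finset.Icc n₀ n₁).card : ℤ) = n₁ + 1 - n₀ := by
        rw [Int.card_Icc, Int.toNat_of_nonneg (by omega)]
      have hc' : ((Finset.Icc n₀ n₁).card : ℝ) = (n₁:ℝ) + 1 - n₀ := by
        exact_mod_cast congrArg (Int.cast : ℤ → ℝ) hc
      rw [hc']
      linarith [hCA]
    have hVge : s * (k₂ - k₁) - s * (s + 1) / B ≤ (volume Q).toReal := by
      rw [hV]
      have h1 : ∑ m ∈ Finset.Icc n₀ n₁, t m ≤ ∑ m ∈ Finset.Icc m₀ m₁, t m :=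
        Finset.sum_le_sum_of_subset_of_nonneg hsub (fun i _ _ => ht_nonneg i)
      have h2 : ∑ m ∈ Finset.Icc n₀ n₁, t m = ((Finset.Icc n₀ n₁).card : ℝ) * (s / B) := by
        rw [Finset.sum_congr rfl ht_eq, Finset.sum_const, nsmul_eq_mul]
      have h3 : (B * (k₂ - k₁) - s - 1) * (s / B)
          ≤ ((Finset.Icc n₀ n₁).card : ℝ) * (s / B) :=
        mul_le_mul_of_nonneg_right hcard2 (div_nonneg hs0 hB0.le)
      have h4 : (B * (k₂ - k₁) - s - 1) * (s / B) = s * (k₂ - k₁) - s * (s + 1) / B := by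
        field_simp
        ring
      linarith
    -- conclude
    have hfr : s * (s + 1) / B ≤ 2 * s / B := by
      apply (div_le_div_iff_of_pos_right hB0).mpr
      have h := mul_nonpos_of_nonneg_of_nonpos hs0 (by linarith only [hs1] : s - 1 ≤ 0)
      nlinarith only [h]
    have hexp : s * (k₂ - k₁) = (l₂ - l₁) * (k₂ - k₁) + γ * (k₂ - k₁) := by
      rw [hs]; ring
    have hsplit : 2 * (l₂ - l₁) / B + 2 * γ / B = 2 * s / B := by
      rw [← add_div]
      congr 1
      rw [hs]; ring
    have hγΔ : 0 ≤ γ * (k₂ - k₁) := mul_nonneg hγ hΔ0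
    rw [abs_le]
    constructor
    · linarith only [hVle, hVge, hfr, hexp, hsplit, hγΔ]
    · linarith only [hVle, hVge, hfr, hexp, hsplit, hγΔ]
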